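/- For the contracted diameter gadget (G',w'): if F(x,y)=1 then D_{G',w'} ≤ max{2α, β}, and if F(x,y)=0 then D_{G',w'} ≥ min{α+β, 3α}. -/

import Mathlib

open scoped ENNReal

set_option linter.unusedVariables false

/-- The length of a walk with respect to `ℝ≥0∞` edge weights. -/
noncomputable def wlen {V : Type*} (G : SimpleGraph V) (w : V → V → ℝ≥0∞) {u v : V}
    (p : G.Walk u v) : ℝ≥0∞ :=
  (p.darts.map fun d => w d.toProd.1 d.toProd.2).sum

/-- The weighted distance: the infimum of walk lengths. -/
noncomputable def wdist {V : Type*} (G : SimpleGraph V) (w : V → V → ℝ≥0∞) (u v : V) : ℝ≥0∞ :=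
  ⨅ p : G.Walk u v, wlen G w p

/-- Vertices of the contracted diameter gadget. -/
inductive CV (s ℓ : ℕ) where
  /-- the hub `t` -/
  | t
  /-- node `a^z_{j+1}` -/
  | ah (z : Bool) (j : Fin s)
  /-- node `a*_{j+1}` -/
  | as (j : Fin ℓ)
  /-- node `a_{i+1}` -/
  | a (i : Fin (2 ^ s))
  /-- node `b_{i+1}` -/
  | b (i : Fin (2 ^ s))
  deriving DecidableEq, Fintype

/-- Base (oriented) adjacency of the contracted diameter gadget.  Here `bin(i,j)` is
realized as `Nat.testBit` on the 0-based index, and `bin(i,j)⊕1` as its negation. -/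
def cAdj0 {s ℓ : ℕ} : CV s ℓ → CV s ℓ → Prop
  | .t, .ah _ _ => True
  | .t, .as _ => True
  | .a i, .ah z j => z = i.val.testBit j.val
  | .b i, .ah z j => z = !(i.val.testBit j.val)
  | .a i, .a i' => i ≠ i'
  | .b i, .b i' => i ≠ i'
  | .a _, .as _ => True
  | .b _, .as _ => True
  | _, _ => False

/-- The contracted diameter gadget graph. -/
def cGadget (s ℓ : ℕ) : SimpleGraph (CV s ℓ) where
  Adj u v := u ≠ v ∧ (cAdj0 u v ∨ cAdj0 v u)
  symm := ⟨fun u v huv => ⟨huv.1.symm, huv.2.symm⟩⟩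
  loopless := ⟨fun u hu => hu.1 rfl⟩

/-- The weights of the contracted diameter gadget: every edge has weight `α`,
except `a_i`–`a*_j` which has weight `α` if `x_{i,j}=1` and `β` otherwise, and
`b_i`–`a*_j` which has weight `α` if `y_{i,j}=1` and `β` otherwise. -/
def cW {s ℓ : ℕ} (x y : Fin (2 ^ s) → Fin ℓ → Bool) (α β : ℕ) : CV s ℓ → CV s ℓ → ℕ
  | .a i, .as j => if x i j then α else β
  | .as j, .a i => if x i j then α else β
  | .b i, .as j => if y i j then α else β
  | .as j, .b i => if y i j then α else β
  | _, _ => α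

/-- Weighted diameter `D_{G,w} = max_{u,v} d_{G,w}(u,v)`. -/
noncomputable def wdiam {V : Type*} (G : SimpleGraph V) (w : V → V → ℝ≥0∞) : ℝ≥0∞ :=
  ⨆ u, ⨆ v, wdist G w u v


section WalkHelpers
variable {V : Type*} {G : SimpleGraph V} {w : V → V → ℝ≥0∞}

lemma wlen_nil {u : V} : wlen G w (SimpleGraph.Walk.nil : G.Walk u u) = 0 := rfl

lemma wlen_cons {u v z : V} (h : G.Adj u v) (p : G.Walk v z) :
    wlen G w (SimpleGraph.Walk.cons h p) = w u v + wlen G w p := by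
  simp [wlen]

lemma wdist_le_wlen {u v : V} (p : G.Walk u v) : wdist G w u v ≤ wlen G w p := iInf_le _ p

lemma wdist_self_le (u : V) : wdist G w u u ≤ 0 :=
  (wdist_le_wlen SimpleGraph.Walk.nil).trans (le_of_eq wlen_nil)

lemma wdist_le_one {u v : V} (h : G.Adj u v) : wdist G w u v ≤ w u v := by
  refine (wdist_le_wlen (SimpleGraph.Walk.cons h .nil)).trans ?_
  rw [wlen_cons, wlen_nil, add_zero]

lemma wdist_le_two {u v z : V} (h1 : G.Adj u v) (h2 : G.Adj v z) :
    wdist G w u z ≤ w u v + w v z := by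
  refine (wdist_le_wlen (SimpleGraph.Walk.cons h1 (SimpleGraph.Walk.cons h2 .nil))).trans ?_
  rw [wlen_cons, wlen_cons, wlen_nil, add_zero]

end WalkHelpers

section GadgetAdj
variable {s ℓ : ℕ}

lemma adj_t_ah (z : Bool) (j : Fin s) : (cGadget s ℓ).Adj .t (.ah z j) :=
  ⟨nofun, Or.inl trivial⟩

lemma adj_t_as (j : Fin ℓ) : (cGadget s ℓ).Adj .t (.as j) :=
  ⟨nofun, Or.inl trivial⟩

lemma adj_a_ah' {i : Fin (2 ^ s)} {z : Bool} {j : Fin s} (h : z = i.val.testBit j.val) :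
    (cGadget s ℓ).Adj (.a i) (.ah z j) :=
  ⟨nofun, Or.inl h⟩

lemma adj_a_ah (i : Fin (2 ^ s)) (j : Fin s) :
    (cGadget s ℓ).Adj (.a i) (.ah (i.val.testBit j.val) j) := adj_a_ah' rfl

lemma adj_b_ah' {i : Fin (2 ^ s)} {z : Bool} {j : Fin s} (h : z = !(i.val.testBit j.val)) :
    (cGadget s ℓ).Adj (.b i) (.ah z j) :=
  ⟨nofun, Or.inl h⟩

lemma adj_b_ah (i : Fin (2 ^ s)) (j : Fin s) :
    (cGadget s ℓ).Adj (.b i) (.ah (!(i.val.testBit j.val)) j) := adj_b_ah' rfl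

lemma adj_a_a {i i' : Fin (2 ^ s)} (h : i ≠ i') : (cGadget s ℓ).Adj (.a i) (.a i') :=
  ⟨fun he => h (by injection he), Or.inl h⟩

lemma adj_b_b {i i' : Fin (2 ^ s)} (h : i ≠ i') : (cGadget s ℓ).Adj (.b i) (.b i') :=
  ⟨fun he => h (by injection he), Or.inl h⟩

lemma adj_a_as (i : Fin (2 ^ s)) (j : Fin ℓ) : (cGadget s ℓ).Adj (.a i) (.as j) :=
  ⟨nofun, Or.inl trivial⟩

lemma adj_b_as (i : Fin (2 ^ s)) (j : Fin ℓ) : (cGadget s ℓ).Adj (.b i) (.as j) :=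
  ⟨nofun, Or.inl trivial⟩

/-- flipping bit `j` of `i` stays in range and flips exactly that test bit -/
lemma flip_exists (i : Fin (2 ^ s)) (j : Fin s) :
    ∃ i' : Fin (2 ^ s), i ≠ i' ∧ i'.val.testBit j.val = !(i.val.testBit j.val) := by
  have hlt : (2 : ℕ) ^ j.val < 2 ^ s := Nat.pow_lt_pow_right one_lt_two j.isLt
  refine ⟨⟨i.val ^^^ 2 ^ j.val, Nat.xor_lt_two_pow i.isLt hlt⟩, ?_, ?_⟩
  · intro h
    have := congrArg (fun k : Fin (2 ^ s) => k.val.testBit j.val) h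
    simp [Nat.testBit_xor, Nat.testBit_two_pow_self] at this
  · simp [Nat.testBit_xor, Nat.testBit_two_pow_self]

lemma diffbit {i i' : Fin (2 ^ s)} (hne : i ≠ i') :
    ∃ j : Fin s, i.val.testBit j.val ≠ i'.val.testBit j.val := by
  by_contra h
  push_neg at h
  apply hne
  apply Fin.ext
  apply Nat.eq_of_testBit_eq
  intro k
  by_cases hk : k < s
  · exact h ⟨k, hk⟩
  · rw [Nat.testBit_lt_two_pow, Nat.testBit_lt_two_pow] <;>
      exact lt_of_lt_of_le (Fin.isLt _) (Nat.pow_le_pow_right (by norm_num) (le_of_not_gt hk))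

end GadgetAdj

/-- For the contracted diameter gadget `(G',w')`: if `F(x,y)=1` then
`D_{G',w'} ≤ max{2α, β}`, and if `F(x,y)=0` then `D_{G',w'} ≥ min{α+β, 3α}`, where
`F(x,y) = ⋀_i ⋁_j (x_{i,j} ∧ y_{i,j})`. -/
theorem stmt7 (s ℓ : ℕ) (hs : 1 ≤ s) (hℓ : 1 ≤ ℓ)
    (α β : ℕ) (hα : 0 < α) (hαβ : α ≤ β)
    (x y : Fin (2 ^ s) → Fin ℓ → Bool) :
    ((∀ i : Fin (2 ^ s), ∃ j : Fin ℓ, x i j = true ∧ y i j = true) →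
      wdiam (cGadget s ℓ) (fun p q => ((cW x y α β p q : ℕ) : ℝ≥0∞)) ≤
        ((max (2 * α) β : ℕ) : ℝ≥0∞)) ∧
    ((¬ ∀ i : Fin (2 ^ s), ∃ j : Fin ℓ, x i j = true ∧ y i j = true) →
      ((min (α + β) (3 * α) : ℕ) : ℝ≥0∞) ≤
        wdiam (cGadget s ℓ) (fun p q => ((cW x y α β p q : ℕ) : ℝ≥0∞))) := by
  constructor
  · -- upper bound
    intro hF
    set W : CV s ℓ → CV s ℓ → ℝ≥0∞ := fun p q => ((cW x y α β p q : ℕ) : ℝ≥0∞) with hWdef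
    set M : ℝ≥0∞ := ((max (2 * α) β : ℕ) : ℝ≥0∞) with hMdef
    have hαM : ((α : ℕ) : ℝ≥0∞) ≤ M :=
      Nat.cast_le.mpr (le_trans (by omega) (le_max_left (2 * α) β))
    have hβM : ((β : ℕ) : ℝ≥0∞) ≤ M := Nat.cast_le.mpr (le_max_right (2 * α) β)
    have h2αM : ((α : ℕ) : ℝ≥0∞) + ((α : ℕ) : ℝ≥0∞) ≤ M := by
      have h1 : ((α + α : ℕ) : ℝ≥0∞) ≤ M :=
        Nat.cast_le.mpr (le_trans (by omega) (le_max_left (2 * α) β))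
      simpa using h1
    have one : ∀ {u v : CV s ℓ}, (cGadget s ℓ).Adj u v → W u v ≤ M →
        wdist (cGadget s ℓ) W u v ≤ M := fun h hw => (wdist_le_one h).trans hw
    have two : ∀ {u v z : CV s ℓ}, (cGadget s ℓ).Adj u v → (cGadget s ℓ).Adj v z →
        W u v + W v z ≤ M → wdist (cGadget s ℓ) W u z ≤ M :=
      fun h1 h2 hw => (wdist_le_two h1 h2).trans hw
    have j0 : Fin s := ⟨0, hs⟩
    refine iSup_le fun u => iSup_le fun v => ?_
    rcases u with _ | ⟨z, j⟩ | j | i | i <;> rcases v with _ | ⟨z', j'⟩ | j' | i' | i'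
    -- t, t
    · exact le_trans (wdist_self_le _) zero_le
    -- t, ah
    · exact one (adj_t_ah z' j') hαM
    -- t, as
    · exact one (adj_t_as j') hαM
    -- t, a
    · exact two (adj_t_ah (i'.val.testBit j0.val) j0) (adj_a_ah i' j0).symm h2αM
    -- t, b
    · exact two (adj_t_ah (!(i'.val.testBit j0.val)) j0) (adj_b_ah i' j0).symm h2αM
    -- ah, t
    · exact one (adj_t_ah z j).symm hαM
    -- ah, ah
    · exact two (adj_t_ah z j).symm (adj_t_ah z' j') h2αM
    -- ah, as
    · exact two (adj_t_ah z j).symm (adj_t_as j') h2αM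
    -- ah, a
    · by_cases hz : z = i'.val.testBit j.val
      · exact one (adj_a_ah' hz).symm hαM
      · obtain ⟨i'', hne, hbit⟩ := flip_exists i' j
        have hz' : z = i''.val.testBit j.val := by
          rw [hbit]; revert hz; cases z <;> cases i'.val.testBit j.val <;> simp
        exact two (adj_a_ah' hz').symm (adj_a_a hne.symm) h2αM
    -- ah, b
    · by_cases hz : z = !(i'.val.testBit j.val)
      · exact one (adj_b_ah' hz).symm hαM
      · obtain ⟨i'', hne, hbit⟩ := flip_exists i' j
        have hz' : z = !(i''.val.testBit j.val) := by
          rw [hbit]; revert hz; cases z <;> cases i'.val.testBit j.val <;> simp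
        exact two (adj_b_ah' hz').symm (adj_b_b hne.symm) h2αM
    -- as, t
    · exact one (adj_t_as j).symm hαM
    -- as, ah
    · exact two (adj_t_as j).symm (adj_t_ah z' j') h2αM
    -- as, as
    · exact two (adj_t_as j).symm (adj_t_as j') h2αM
    -- as, a
    · refine one (adj_a_as i' j).symm ?_
      show ((if x i' j then α else β : ℕ) : ℝ≥0∞) ≤ M
      split
      · exact hαM
      · exact hβM
    -- as, b
    · refine one (adj_b_as i' j).symm ?_
      show ((if y i' j then α else β : ℕ) : ℝ≥0∞) ≤ M
      split
      · exact hαM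
      · exact hβM
    -- a, t
    · exact two (adj_a_ah i j0) (adj_t_ah _ _).symm h2αM
    -- a, ah
    · by_cases hz : z' = i.val.testBit j'.val
      · exact one (adj_a_ah' hz) hαM
      · obtain ⟨i'', hne, hbit⟩ := flip_exists i j'
        have hz' : z' = i''.val.testBit j'.val := by
          rw [hbit]; revert hz; cases z' <;> cases i.val.testBit j'.val <;> simp
        exact two (adj_a_a hne) (adj_a_ah' hz') h2αM
    -- a, as
    · refine one (adj_a_as i j') ?_
      show ((if x i j' then α else β : ℕ) : ℝ≥0∞) ≤ M
      split
      · exact hαM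
      · exact hβM
    -- a, a
    · by_cases h : i = i'
      · subst h; exact le_trans (wdist_self_le _) zero_le
      · exact one (adj_a_a h) hαM
    -- a, b
    · by_cases h : i = i'
      · subst h
        obtain ⟨j, hx, hy⟩ := hF i
        refine two (adj_a_as i j) (adj_b_as i j).symm ?_
        show ((if x i j then α else β : ℕ) : ℝ≥0∞) +
          ((if y i j then α else β : ℕ) : ℝ≥0∞) ≤ M
        rw [if_pos hx, if_pos hy]; exact h2αM
      · obtain ⟨j, hj⟩ := diffbit h
        have hz : i.val.testBit j.val = !(i'.val.testBit j.val) := by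
          revert hj; cases i.val.testBit j.val <;> cases i'.val.testBit j.val <;> simp
        exact two (adj_a_ah i j) (adj_b_ah' hz).symm h2αM
    -- b, t
    · exact two (adj_b_ah i j0) (adj_t_ah _ _).symm h2αM
    -- b, ah
    · by_cases hz : z' = !(i.val.testBit j'.val)
      · exact one (adj_b_ah' hz) hαM
      · obtain ⟨i'', hne, hbit⟩ := flip_exists i j'
        have hz' : z' = !(i''.val.testBit j'.val) := by
          rw [hbit]; revert hz; cases z' <;> cases i.val.testBit j'.val <;> simp
        exact two (adj_b_b hne) (adj_b_ah' hz') h2αM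
    -- b, as
    · refine one (adj_b_as i j') ?_
      show ((if y i j' then α else β : ℕ) : ℝ≥0∞) ≤ M
      split
      · exact hαM
      · exact hβM
    -- b, a
    · by_cases h : i = i'
      · subst h
        obtain ⟨j, hx, hy⟩ := hF i
        refine two (adj_b_as i j) (adj_a_as i j).symm ?_
        show ((if y i j then α else β : ℕ) : ℝ≥0∞) +
          ((if x i j then α else β : ℕ) : ℝ≥0∞) ≤ M
        rw [if_pos hx, if_pos hy]; exact h2αM
      · obtain ⟨j, hj⟩ := diffbit h
        have hz : (!(i.val.testBit j.val)) = i'.val.testBit j.val := by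
          revert hj; cases i.val.testBit j.val <;> cases i'.val.testBit j.val <;> simp
        exact two (adj_b_ah i j) (adj_a_ah' hz).symm h2αM
    -- b, b
    · by_cases h : i = i'
      · subst h; exact le_trans (wdist_self_le _) zero_le
      · exact one (adj_b_b h) hαM
  · -- lower bound
    intro hF
    push_neg at hF
    obtain ⟨i, hi⟩ := hF
    set W : CV s ℓ → CV s ℓ → ℝ≥0∞ := fun p q => ((cW x y α β p q : ℕ) : ℝ≥0∞) with hWdef
    set m : ℝ≥0∞ := ((min (α + β) (3 * α) : ℕ) : ℝ≥0∞) with hmdef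
    have hm1 : m ≤ ((α + β : ℕ) : ℝ≥0∞) := Nat.cast_le.mpr (min_le_left _ _)
    have hm2 : m ≤ ((3 * α : ℕ) : ℝ≥0∞) := Nat.cast_le.mpr (min_le_right _ _)
    have hcw : ∀ u v : CV s ℓ, ((α : ℕ) : ℝ≥0∞) ≤ W u v := by
      intro u v
      refine Nat.cast_le.mpr ?_
      cases u <;> cases v <;> simp only [cW] <;> (try split_ifs) <;> omega
    refine le_trans ?_ (le_iSup_of_le (CV.a i) (le_iSup_of_le (CV.b i) le_rfl))
    refine le_iInf fun p => ?_
    cases p with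
    | cons h q =>
      rename_i v
      cases q with
      | nil =>
        rcases h with ⟨-, h | h⟩ <;> exact h.elim
      | cons h2 r =>
        rename_i v'
        cases r with
        | nil =>
          -- exactly two edges: a i - v - b i
          rw [wlen_cons, wlen_cons, wlen_nil, add_zero]
          rcases v with _ | ⟨z, j⟩ | j | i'' | i''
          · rcases h with ⟨-, h | h⟩ <;> exact h.elim
          · -- through ah: contradiction
            rcases h with ⟨-, h | h⟩
            · rcases h2 with ⟨-, h2 | h2⟩
              · exact h2.elim
              · exfalso
                have h2' : z = !(i.val.testBit j.val) := h2
                have h' : z = i.val.testBit j.val := h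
                rw [h'] at h2'
                cases i.val.testBit j.val <;> simp at h2'
            · exact h.elim
          · -- through as j: weight ≥ α + β
            have hkey : (α + β : ℕ) ≤ (if x i j then α else β) + (if y i j then α else β) := by
              have := hi j
              split_ifs with h1 h2 h2 <;> simp_all <;> omega
            calc m ≤ ((α + β : ℕ) : ℝ≥0∞) := hm1
              _ ≤ (((if x i j then α else β) + (if y i j then α else β) : ℕ) : ℝ≥0∞) :=
                  Nat.cast_le.mpr hkey
              _ = W (CV.a i) (CV.as j) + W (CV.as j) (CV.b i) := by
                  simp only [hWdef, cW]; push_cast; rfl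
          · rcases h2 with ⟨-, h2 | h2⟩ <;> exact h2.elim
          · rcases h with ⟨-, h | h⟩ <;> exact h.elim
        | cons h3 r2 =>
          rename_i v''
          rw [wlen_cons, wlen_cons, wlen_cons]
          calc m ≤ ((3 * α : ℕ) : ℝ≥0∞) := hm2
            _ = ((α : ℕ) : ℝ≥0∞) + (((α : ℕ) : ℝ≥0∞) + ((α : ℕ) : ℝ≥0∞)) := by
                push_cast; ring
            _ ≤ W _ _ + (W _ _ + W _ _) :=
                add_le_add (hcw _ _) (add_le_add (hcw _ _) (hcw _ _))
            _ ≤ W _ _ + (W _ _ + (W _ _ + wlen (cGadget s ℓ) W r2)) := by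
                gcongr
                exact le_self_add
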